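/- Let n ∈ ℕ and α, β > −1 be real, let L = 2n+α+β+1, and define Y(θ) = (1−cos θ)^((2α+1)/4)·(1+cos θ)^((2β+1)/4)·P_n^{(α,β)}(cos θ) for θ ∈ (0,π). Then for every θ ∈ (0,π) with P_n^{(α,β)}(cos θ) ≠ 0: sin θ · Y'(θ)/Y(θ) = 1/2 + α + L·sin²(θ/2) − 2(n+α+β+1)·sin²(θ/2)·P_n^{(α+1,β)}(cos θ)/P_n^{(α,β)}(cos θ). -/

import Mathlib

open Real Filter Set

/-- Generalized binomial coefficient `C(t, k) = t(t-1)⋯(t-k+1)/k!`. -/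
noncomputable def genBinom (t : ℝ) (k : ℕ) : ℝ :=
  (∏ i ∈ Finset.range k, (t - i)) / (Nat.factorial k)

/-- The Jacobi polynomial `P_n^{(α,β)}(x)`. -/
noncomputable def jacobiP (n : ℕ) (α β : ℝ) (x : ℝ) : ℝ :=
  ∑ m ∈ Finset.range (n + 1),
    genBinom (n + α) m * genBinom (n + β) (n - m) * ((x - 1) / 2) ^ (n - m) * ((x + 1) / 2) ^ m

lemma genBinom_zero (t : ℝ) : genBinom t 0 = 1 := by simp [genBinom]

lemma genBinom_succ_mul (t : ℝ) (k : ℕ) :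
    genBinom t (k + 1) * (k + 1) = genBinom t k * (t - k) := by
  unfold genBinom
  rw [Finset.prod_range_succ, Nat.factorial_succ]
  have hk : ((Nat.factorial k : ℝ)) ≠ 0 := Nat.cast_ne_zero.mpr (Nat.factorial_ne_zero k)
  have hk1 : ((k:ℝ) + 1) ≠ 0 := by positivity
  push_cast
  field_simp

lemma genBinom_pascal (t : ℝ) (k : ℕ) :
    genBinom (t + 1) (k + 1) = genBinom t (k + 1) + genBinom t k := by
  unfold genBinom
  rw [Finset.prod_range_succ' (fun i => t + 1 - (i:ℝ)), Finset.prod_range_succ, Nat.factorial_succ]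
  rw [Finset.prod_congr rfl (fun i hi => by push_cast; ring_nf :
    ∀ i ∈ Finset.range k, (t + 1 - ((i+1:ℕ):ℝ)) = t - i)]
  have hk : ((Nat.factorial k : ℝ)) ≠ 0 := Nat.cast_ne_zero.mpr (Nat.factorial_ne_zero k)
  have hk1 : ((k:ℝ) + 1) ≠ 0 := by positivity
  push_cast
  field_simp
  ring

/-- Explicit formula for the derivative of the Jacobi polynomial. -/
noncomputable def jderiv (n : ℕ) (α β : ℝ) (x : ℝ) : ℝ :=
  ∑ m ∈ Finset.range (n + 1),
    genBinom (n + α) m * genBinom (n + β) (n - m) *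
      ((↑(n - m) * ((x - 1) / 2) ^ (n - m - 1) * (1 / 2)) * ((x + 1) / 2) ^ m
        + ((x - 1) / 2) ^ (n - m) * (↑m * ((x + 1) / 2) ^ (m - 1) * (1 / 2)))

lemma jacobiP_hasDerivAt (n : ℕ) (α β x : ℝ) :
    HasDerivAt (jacobiP n α β) (jderiv n α β x) x := by
  unfold jacobiP jderiv
  apply HasDerivAt.fun_sum
  intro m _
  have hu : HasDerivAt (fun x : ℝ => (x - 1) / 2) (1 / 2) x := by
    simpa using ((hasDerivAt_id x).sub_const 1).div_const 2
  have hv : HasDerivAt (fun x : ℝ => (x + 1) / 2) (1 / 2) x := by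
    simpa using ((hasDerivAt_id x).add_const 1).div_const 2
  have h1 := ((hu.fun_pow (n - m)).const_mul (genBinom (n + α) m * genBinom (n + β) (n - m))).fun_mul
    (hv.fun_pow m)
  convert h1 using 1
  · rfl
  ring

lemma key (n : ℕ) (α β x : ℝ) :
    (1 + x) * jderiv n α β x
      = ((n : ℝ) + α + β + 1) * (jacobiP n (α + 1) β x - jacobiP n α β x) := by
  set u : ℝ := (x - 1) / 2 with hu
  set v : ℝ := (x + 1) / 2 with hv
  have h2v : 1 + x = 2 * v := by rw [hv]; ring
  unfold jderiv jacobiP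
  rw [h2v, Finset.mul_sum, ← Finset.sum_sub_distrib, Finset.mul_sum]
  have lhs_eq : ∀ m ∈ Finset.range (n + 1),
      2 * v * (genBinom (n + α) m * genBinom (n + β) (n - m) *
      ((↑(n - m) * u ^ (n - m - 1) * (1 / 2)) * v ^ m + u ^ (n - m) * (↑m * v ^ (m - 1) * (1 / 2))))
      = genBinom (n + α) m * genBinom (n + β) (n - m) * (↑(n - m) * u ^ (n - m - 1)) * v ^ (m + 1)
        + genBinom (n + α) m * genBinom (n + β) (n - m) * ↑m * u ^ (n - m) * v ^ m := by
    intro m _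
    rcases m with _ | m
    · simp; ring
    · simp only [Nat.add_sub_cancel]
      rw [pow_succ, pow_succ]
      push_cast
      ring
  rw [Finset.sum_congr rfl lhs_eq, Finset.sum_add_distrib]
  rw [Finset.sum_range_succ
    (fun m => genBinom (n + α) m * genBinom (n + β) (n - m) * (↑(n - m) * u ^ (n - m - 1)) * v ^ (m + 1))]
  rw [Finset.sum_range_succ'
    (fun m => genBinom (n + α) m * genBinom (n + β) (n - m) * ↑m * u ^ (n - m) * v ^ m)]
  rw [Finset.sum_range_succ'
    (fun m => ((n : ℝ) + α + β + 1) * (genBinom (n + (α + 1)) m * genBinom (n + β) (n - m) * u ^ (n - m) * v ^ m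
      - genBinom (n + α) m * genBinom (n + β) (n - m) * u ^ (n - m) * v ^ m))]
  simp only [Nat.sub_self, Nat.cast_zero, Nat.cast_ofNat, genBinom_zero, pow_zero,
    mul_zero, zero_mul, mul_one, add_zero, sub_self, mul_zero]
  rw [← Finset.sum_add_distrib]
  apply Finset.sum_congr rfl
  intro m hm
  have hmn : m < n := Finset.mem_range.mp hm
  obtain ⟨k, hk⟩ := Nat.exists_eq_add_of_lt hmn
  have e1 : n - m = k + 1 := by omega
  have e2 : n - (m + 1) = k := by omega
  rw [e1, e2, Nat.add_sub_cancel]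
  have hpas : genBinom ((n : ℝ) + (α + 1)) (m + 1)
      = genBinom ((n : ℝ) + α) (m + 1) + genBinom ((n : ℝ) + α) m := by
    rw [show (n : ℝ) + (α + 1) = ((n : ℝ) + α) + 1 by ring]
    exact genBinom_pascal _ m
  rw [hpas]
  have h2 := genBinom_succ_mul ((n : ℝ) + α) m
  have h3 := genBinom_succ_mul ((n : ℝ) + β) k
  have hn : (n : ℝ) = (m : ℝ) + (k : ℝ) + 1 := by rw [hk]; push_cast; ring
  push_cast
  linear_combination (genBinom ((n:ℝ) + α) m * u ^ k * v ^ (m + 1)) * h3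
    + (genBinom ((n:ℝ) + β) k * u ^ k * v ^ (m + 1)) * h2
    + (genBinom ((n:ℝ) + α) m * genBinom ((n:ℝ) + β) k * u ^ k * v ^ (m + 1)) * hn

theorem stmt14 (n : ℕ) (α β : ℝ) (hα : -1 < α) (hβ : -1 < β)
    (L : ℝ) (hL : L = 2 * n + α + β + 1)
    (Y : ℝ → ℝ)
    (hY : ∀ θ ∈ Set.Ioo 0 Real.pi,
      Y θ = (1 - Real.cos θ) ^ ((2 * α + 1) / 4) * (1 + Real.cos θ) ^ ((2 * β + 1) / 4) *
        jacobiP n α β (Real.cos θ))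
    (θ : ℝ) (hθ : θ ∈ Set.Ioo 0 Real.pi) (hP : jacobiP n α β (Real.cos θ) ≠ 0) :
    Real.sin θ * deriv Y θ / Y θ = 1 / 2 + α + L * Real.sin (θ / 2) ^ 2
      - 2 * ((n : ℝ) + α + β + 1) * Real.sin (θ / 2) ^ 2 *
        (jacobiP n (α + 1) β (Real.cos θ) / jacobiP n α β (Real.cos θ)) := by
  obtain ⟨hθ0, hθπ⟩ := hθ
  have hsin : 0 < Real.sin θ := Real.sin_pos_of_pos_of_lt_pi hθ0 hθπ
  have hsq : Real.sin θ ^ 2 = 1 - Real.cos θ ^ 2 := Real.sin_sq θ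
  have hc1 : 0 < 1 - Real.cos θ := by nlinarith
  have hc2 : 0 < 1 + Real.cos θ := by nlinarith
  have hs2 : Real.sin θ ^ 2 = (1 - Real.cos θ) * (1 + Real.cos θ) := by nlinarith
  have fh : Real.sin (θ / 2) ^ 2 = (1 - Real.cos θ) / 2 := by
    have h1 := Real.cos_sq (θ / 2)
    have h2 := Real.sin_sq_add_cos_sq (θ / 2)
    rw [show 2 * (θ / 2) = θ by ring] at h1
    linarith
  -- derivative of Y
  have h1 : HasDerivAt (fun t : ℝ => 1 - Real.cos t) (Real.sin θ) θ := by
    simpa using (Real.hasDerivAt_cos θ).const_sub 1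
  have h2 : HasDerivAt (fun t : ℝ => 1 + Real.cos t) (-Real.sin θ) θ := by
    simpa using (Real.hasDerivAt_cos θ).const_add 1
  have h1r := h1.rpow_const (p := (2 * α + 1) / 4) (Or.inl hc1.ne')
  have h2r := h2.rpow_const (p := (2 * β + 1) / 4) (Or.inl hc2.ne')
  have h3 := (jacobiP_hasDerivAt n α β (Real.cos θ)).comp θ (Real.hasDerivAt_cos θ)
  have hF := (h1r.fun_mul h2r).fun_mul h3
  have hev : Y =ᶠ[nhds θ] fun t : ℝ =>
      (1 - Real.cos t) ^ ((2 * α + 1) / 4) * (1 + Real.cos t) ^ ((2 * β + 1) / 4) *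
        jacobiP n α β (Real.cos t) :=
    Filter.eventuallyEq_of_mem (isOpen_Ioo.mem_nhds ⟨hθ0, hθπ⟩) hY
  simp only [Function.comp_def] at hF
  rw [hev.deriv_eq, hF.deriv, hY θ ⟨hθ0, hθπ⟩]
  -- key facts
  have hkey : jderiv n α β (Real.cos θ)
      = ((n : ℝ) + α + β + 1) * (jacobiP n (α + 1) β (Real.cos θ) - jacobiP n α β (Real.cos θ))
        / (1 + Real.cos θ) := by
    rw [eq_div_iff hc2.ne']
    linear_combination key n α β (Real.cos θ)
  have fA : (1 - Real.cos θ) ^ ((2 * α + 1) / 4 - 1)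
      = (1 - Real.cos θ) ^ ((2 * α + 1) / 4) / (1 - Real.cos θ) := by
    rw [eq_div_iff hc1.ne', ← Real.rpow_add_one hc1.ne']
    norm_num
  have fB : (1 + Real.cos θ) ^ ((2 * β + 1) / 4 - 1)
      = (1 + Real.cos θ) ^ ((2 * β + 1) / 4) / (1 + Real.cos θ) := by
    rw [eq_div_iff hc2.ne', ← Real.rpow_add_one hc2.ne']
    norm_num
  have hA : 0 < (1 - Real.cos θ) ^ ((2 * α + 1) / 4) := Real.rpow_pos_of_pos hc1 _
  have hB : 0 < (1 + Real.cos θ) ^ ((2 * β + 1) / 4) := Real.rpow_pos_of_pos hc2 _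
  rw [div_eq_iff (by exact mul_ne_zero (mul_ne_zero hA.ne' hB.ne') hP)]
  rw [hkey, fA, fB, fh, hL]
  field_simp
  ring_nf
  simp only [hs2]
  ring
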